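/- Let g(d; ν, η, n) = exp(ν ηᵀ d) / [₀F₁(n/2, D²/4)]^ν for d ∈ ℝ₊^p, where ν > 0, η = (η₁,…,η_p) ∈ ℝ^p and n ≥ p. Then ∫_{ℝ₊^p} g(d; ν, η, n) dd < ∞ if and only if max_{1 ≤ j ≤ p} η_j < 1. -/

import Mathlib

open Matrix MeasureTheory

/-- Borel (product) σ-algebra on real matrices. -/
instance matrixMeasurableSpace {m k : ℕ} : MeasurableSpace (Matrix (Fin m) (Fin k) ℝ) :=
  inferInstanceAs (MeasurableSpace (Fin m → Fin k → ℝ))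

/-- `₀F₁(n/2, D²/4) = ∫ exp(∑ⱼ dⱼ X_{j,j}) dμ(X)` over the Stiefel manifold. -/
noncomputable def hypF {n p : ℕ} (hnp : p ≤ n) (μ : Measure (Matrix (Fin n) (Fin p) ℝ))
    (d : Fin p → ℝ) : ℝ :=
  ∫ X, Real.exp (∑ j : Fin p, d j * X (Fin.castLE hnp j) j) ∂μ


instance {m k : ℕ} : MeasurableSingletonClass (Matrix (Fin m) (Fin k) ℝ) :=
  inferInstanceAs (MeasurableSingletonClass (Fin m → Fin k → ℝ))

instance {m k : ℕ} : BorelSpace (Matrix (Fin m) (Fin k) ℝ) :=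
  inferInstanceAs (BorelSpace (Fin m → Fin k → ℝ))

lemma entry_abs_le {n p : ℕ} {X : Matrix (Fin n) (Fin p) ℝ} (h : Xᵀ * X = 1)
    (i : Fin n) (j : Fin p) : |X i j| ≤ 1 := by
  have h1 : ∑ k, X k j * X k j = 1 := by
    have h2 := congrFun (congrFun h j) j
    simpa [Matrix.mul_apply, Matrix.transpose_apply, Matrix.one_apply] using h2
  have h3 : X i j * X i j ≤ 1 := by
    rw [← h1]
    exact Finset.single_le_sum (f := fun k => X k j * X k j)
      (fun k _ => mul_self_nonneg _) (Finset.mem_univ i)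
  nlinarith [abs_nonneg (X i j), sq_abs (X i j), le_abs_self (X i j), neg_abs_le (X i j)]

lemma meas_f {n p : ℕ} (hnp : p ≤ n) (d : Fin p → ℝ) :
    Measurable (fun X : Matrix (Fin n) (Fin p) ℝ =>
      Real.exp (∑ j : Fin p, d j * X (Fin.castLE hnp j) j)) := by
  apply Measurable.exp
  apply Finset.measurable_sum
  intro j _
  exact measurable_const.mul ((measurable_pi_apply j).comp (measurable_pi_apply _))

lemma meas_S {n p : ℕ} :
    MeasurableSet {X : Matrix (Fin n) (Fin p) ℝ | Xᵀ * X = 1} := by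
  have : Measurable (fun X : Matrix (Fin n) (Fin p) ℝ => Xᵀ * X) := by
    apply measurable_pi_lambda
    intro i
    apply measurable_pi_lambda
    intro j
    simp only [Matrix.mul_apply, Matrix.transpose_apply]
    exact Finset.measurable_sum _ fun k _ =>
      Measurable.mul (f := fun c : Matrix (Fin n) (Fin p) ℝ => c k i) (g := fun c => c k j)
        ((measurable_pi_apply i).comp (measurable_pi_apply k))
        ((measurable_pi_apply j).comp (measurable_pi_apply k))
  exact this (MeasurableSet.singleton 1)

lemma ae_S {n p : ℕ} (μ : Measure (Matrix (Fin n) (Fin p) ℝ))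
    [IsProbabilityMeasure μ]
    (hsupp : μ {X : Matrix (Fin n) (Fin p) ℝ | Xᵀ * X = 1} = 1) :
    ∀ᵐ X ∂μ, Xᵀ * X = 1 := by
  rw [ae_iff]
  have : {X : Matrix (Fin n) (Fin p) ℝ | ¬ Xᵀ * X = 1}
      = {X : Matrix (Fin n) (Fin p) ℝ | Xᵀ * X = 1}ᶜ := rfl
  rw [this, measure_compl meas_S (measure_ne_top μ _), hsupp, measure_univ, tsub_self]

lemma integ_f {n p : ℕ} (hnp : p ≤ n) (μ : Measure (Matrix (Fin n) (Fin p) ℝ))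
    [IsProbabilityMeasure μ]
    (hsupp : μ {X : Matrix (Fin n) (Fin p) ℝ | Xᵀ * X = 1} = 1) (d : Fin p → ℝ) :
    Integrable (fun X : Matrix (Fin n) (Fin p) ℝ =>
      Real.exp (∑ j : Fin p, d j * X (Fin.castLE hnp j) j)) μ := by
  refine Integrable.mono' (integrable_const (Real.exp (∑ j, |d j|)))
    (meas_f hnp d).aestronglyMeasurable ?_
  filter_upwards [ae_S μ hsupp] with X hX
  rw [Real.norm_eq_abs, abs_of_pos (Real.exp_pos _), Real.exp_le_exp]
  apply Finset.sum_le_sum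
  intro j _
  calc d j * X (Fin.castLE hnp j) j ≤ |d j * X (Fin.castLE hnp j) j| := le_abs_self _
  _ = |d j| * |X (Fin.castLE hnp j) j| := abs_mul _ _
  _ ≤ |d j| * 1 := by
      exact mul_le_mul_of_nonneg_left (entry_abs_le hX _ _) (abs_nonneg _)
  _ = |d j| := mul_one _

lemma hypF_le {n p : ℕ} (hnp : p ≤ n) (μ : Measure (Matrix (Fin n) (Fin p) ℝ))
    [IsProbabilityMeasure μ]
    (hsupp : μ {X : Matrix (Fin n) (Fin p) ℝ | Xᵀ * X = 1} = 1)
    {d : Fin p → ℝ} (hd : ∀ j, 0 ≤ d j) :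
    hypF hnp μ d ≤ Real.exp (∑ j, d j) := by
  have : hypF hnp μ d ≤ ∫ _X, Real.exp (∑ j, d j) ∂μ := by
    refine integral_mono_ae (integ_f hnp μ hsupp d) (integrable_const _) ?_
    filter_upwards [ae_S μ hsupp] with X hX
    rw [Real.exp_le_exp]
    refine Finset.sum_le_sum fun j _ => ?_
    calc d j * X (Fin.castLE hnp j) j ≤ d j * 1 := by
          refine mul_le_mul_of_nonneg_left ?_ (hd j)
          exact le_trans (le_abs_self _) (entry_abs_le hX _ _)
    _ = d j := mul_one _
  simpa using this

lemma exists_Q {n p : ℕ} (hnp : p ≤ n) {Y : Matrix (Fin n) (Fin p) ℝ}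
    (hY : Yᵀ * Y = 1) :
    ∃ Q : Matrix (Fin n) (Fin n) ℝ, Qᵀ * Q = 1 ∧
      ∀ i j, Q i (Fin.castLE hnp j) = Y i j := by
  classical
  set E := EuclideanSpace ℝ (Fin n)
  set v : Fin n → E := fun i =>
    if h : (i : ℕ) < p then WithLp.toLp 2 (fun k => Y k ⟨(i : ℕ), h⟩) else 0 with hv
  set s : Set (Fin n) := {i | (i : ℕ) < p} with hs
  have hinner : ∀ (i j : Fin n) (hi : (i : ℕ) < p) (hj : (j : ℕ) < p),
      (inner ℝ (v i) (v j) : ℝ) = if (⟨(i:ℕ), hi⟩ : Fin p) = ⟨(j:ℕ), hj⟩ then 1 else 0 := by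
    intro i j hi hj
    have h2 := congrFun (congrFun hY ⟨(i:ℕ), hi⟩) ⟨(j:ℕ), hj⟩
    simp only [Matrix.mul_apply, Matrix.transpose_apply, Matrix.one_apply] at h2
    rw [hv]
    simp only [dif_pos hi, dif_pos hj]
    rw [PiLp.inner_apply]
    simpa [mul_comm] using h2
  have horth : Orthonormal ℝ (s.restrict v) := by
    rw [orthonormal_iff_ite]
    rintro ⟨i, hi⟩ ⟨j, hj⟩
    show (inner ℝ (v i) (v j) : ℝ) = _
    rw [hinner i j hi hj]
    congr 1
    simp only [eq_iff_iff, Fin.mk.injEq, Subtype.mk.injEq, Fin.ext_iff]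
  have hcard : Module.finrank ℝ E = Fintype.card (Fin n) := by
    simp [E]
  obtain ⟨b, hb⟩ := horth.exists_orthonormalBasis_extension_of_card_eq hcard
  refine ⟨fun i k => b k i, ?_, ?_⟩
  · ext k l
    have := orthonormal_iff_ite.mp b.orthonormal k l
    rw [PiLp.inner_apply] at this
    show ∑ x, (b k).ofLp x * (b l).ofLp x = (1 : Matrix (Fin n) (Fin n) ℝ) k l
    simp only [Matrix.mul_apply, Matrix.transpose_apply, Matrix.one_apply]
    simpa [mul_comm] using this
  · intro i j
    have hmem : (Fin.castLE hnp j) ∈ s := by simp [hs]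
    show b (Fin.castLE hnp j) i = Y i j
    rw [hb _ hmem, hv]
    simp only [Fin.coe_castLE, j.isLt, dif_pos]

lemma cont_mulQ {n p : ℕ} (Q : Matrix (Fin n) (Fin n) ℝ) :
    Continuous (fun X : Matrix (Fin n) (Fin p) ℝ => Q * X) := by
  apply continuous_pi
  intro i
  apply continuous_pi
  intro j
  simp only [Matrix.mul_apply]
  exact continuous_finset_sum _ fun k _ =>
    continuous_const.mul ((continuous_apply j).comp (continuous_apply k))

lemma meas_mulQ {n p : ℕ} (Q : Matrix (Fin n) (Fin n) ℝ) :
    Measurable (fun X : Matrix (Fin n) (Fin p) ℝ => Q * X) :=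
  (cont_mulQ Q).measurable

lemma isOpen_U {n p : ℕ} (hnp : p ≤ n) (δ : ℝ) :
    IsOpen {X : Matrix (Fin n) (Fin p) ℝ | ∀ j, 1 - δ < X (Fin.castLE hnp j) j} := by
  have : {X : Matrix (Fin n) (Fin p) ℝ | ∀ j, 1 - δ < X (Fin.castLE hnp j) j}
      = ⋂ j, (fun X : Matrix (Fin n) (Fin p) ℝ => X (Fin.castLE hnp j) j) ⁻¹'
          Set.Ioi (1 - δ) := by
    ext X; simp [Set.mem_iInter]
  rw [this]
  exact isOpen_iInter_of_finite fun j =>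
    isOpen_Ioi.preimage ((continuous_apply j).comp (continuous_apply _))

lemma isCompact_S {n p : ℕ} :
    IsCompact {X : Matrix (Fin n) (Fin p) ℝ | Xᵀ * X = 1} := by
  have hclosed : IsClosed {X : Matrix (Fin n) (Fin p) ℝ | Xᵀ * X = 1} := by
    have hc : Continuous (fun X : Matrix (Fin n) (Fin p) ℝ => Xᵀ * X) := by
      apply continuous_pi
      intro i
      apply continuous_pi
      intro j
      simp only [Matrix.mul_apply, Matrix.transpose_apply]
      exact continuous_finset_sum _ fun k _ =>
        Continuous.mul (f := fun c : Matrix (Fin n) (Fin p) ℝ => c k i) (g := fun c => c k j)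
        ((continuous_apply i).comp (continuous_apply k))
          ((continuous_apply j).comp (continuous_apply k))
    exact isClosed_singleton.preimage hc
  have hbig : IsCompact (Set.univ.pi fun _ : Fin n => Set.univ.pi fun _ : Fin p =>
      Set.Icc (-1:ℝ) 1 : Set (Matrix (Fin n) (Fin p) ℝ)) :=
    isCompact_univ_pi fun _ => isCompact_univ_pi fun _ => isCompact_Icc
  refine IsCompact.of_isClosed_subset hbig hclosed ?_
  intro X hX
  refine Set.mem_univ_pi.mpr ?_
  intro i
  rw [Set.mem_univ_pi]
  intro j
  exact abs_le.mp (entry_abs_le hX i j)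

lemma mu_U_pos {n p : ℕ} (hnp : p ≤ n) (μ : Measure (Matrix (Fin n) (Fin p) ℝ))
    [IsProbabilityMeasure μ]
    (hsupp : μ {X : Matrix (Fin n) (Fin p) ℝ | Xᵀ * X = 1} = 1)
    (hinv : ∀ Q : Matrix (Fin n) (Fin n) ℝ, Qᵀ * Q = 1 →
      Measure.map (fun X => Q * X) μ = μ)
    {δ : ℝ} (hδ : 0 < δ) :
    0 < μ {X : Matrix (Fin n) (Fin p) ℝ | ∀ j, 1 - δ < X (Fin.castLE hnp j) j} := by
  classical
  set U := {X : Matrix (Fin n) (Fin p) ℝ | ∀ j, 1 - δ < X (Fin.castLE hnp j) j} with hU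
  have hUmeas : MeasurableSet U := (isOpen_U hnp δ).measurableSet
  set C : {Q : Matrix (Fin n) (Fin n) ℝ // Qᵀ * Q = 1} → Set (Matrix (Fin n) (Fin p) ℝ) :=
    fun Q => (fun X => Q.1ᵀ * X) ⁻¹' U with hC
  have hCopen : ∀ Q, IsOpen (C Q) := fun Q => (isOpen_U hnp δ).preimage (cont_mulQ Q.1ᵀ)
  have hcov : {X : Matrix (Fin n) (Fin p) ℝ | Xᵀ * X = 1} ⊆ ⋃ Q, C Q := by
    intro Y hY
    obtain ⟨Q, hQ, hcol⟩ := exists_Q hnp hY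
    refine Set.mem_iUnion.mpr ⟨⟨Q, hQ⟩, ?_⟩
    intro j
    have hd : (Qᵀ * Y) (Fin.castLE hnp j) j = 1 := by
      have h2 := congrFun (congrFun hY j) j
      simp only [Matrix.mul_apply, Matrix.transpose_apply, Matrix.one_apply_eq] at h2 ⊢
      rw [← h2]
      exact Finset.sum_congr rfl fun k _ => by rw [hcol k j]
    show 1 - δ < (Qᵀ * Y) (Fin.castLE hnp j) j
    rw [hd]
    linarith
  obtain ⟨t, ht⟩ := isCompact_S.elim_finite_subcover C hCopen hcov
  rw [pos_iff_ne_zero]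
  intro hzero
  have hC0 : ∀ Q, μ (C Q) = 0 := by
    intro Q
    have hQT : Q.1ᵀᵀ * Q.1ᵀ = 1 := by
      rw [Matrix.transpose_transpose]
      exact mul_eq_one_comm.mp Q.2
    calc μ (C Q) = (Measure.map (fun X => Q.1ᵀ * X) μ) U :=
          (Measure.map_apply (meas_mulQ Q.1ᵀ) hUmeas).symm
    _ = μ U := by rw [hinv Q.1ᵀ hQT]
    _ = 0 := hzero
  have h1 : μ {X : Matrix (Fin n) (Fin p) ℝ | Xᵀ * X = 1} ≤ ∑ Q ∈ t, μ (C Q) :=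
    le_trans (measure_mono ht) (measure_biUnion_finset_le t C)
  rw [hsupp] at h1
  simp only [hC0, Finset.sum_const_zero] at h1
  exact (by norm_num : ¬ ((1:ENNReal) ≤ 0)) h1


lemma hypF_ge {n p : ℕ} (hnp : p ≤ n) (μ : Measure (Matrix (Fin n) (Fin p) ℝ))
    [IsProbabilityMeasure μ]
    (hsupp : μ {X : Matrix (Fin n) (Fin p) ℝ | Xᵀ * X = 1} = 1)
    (δ : ℝ) {d : Fin p → ℝ} (hd : ∀ j, 0 ≤ d j) :
    Real.exp ((1 - δ) * ∑ j, d j) *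
      (μ {X : Matrix (Fin n) (Fin p) ℝ | ∀ j, 1 - δ < X (Fin.castLE hnp j) j}).toReal
      ≤ hypF hnp μ d := by
  set U := {X : Matrix (Fin n) (Fin p) ℝ | ∀ j, 1 - δ < X (Fin.castLE hnp j) j} with hU
  have hUmeas : MeasurableSet U := (isOpen_U hnp δ).measurableSet
  have h1 : Real.exp ((1 - δ) * ∑ j, d j) * (μ U).toReal ≤
      ∫ X in U, Real.exp (∑ j : Fin p, d j * X (Fin.castLE hnp j) j) ∂μ := by
    refine setIntegral_ge_of_const_le_real hUmeas (measure_ne_top μ _) ?_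
      ((integ_f hnp μ hsupp d).integrableOn)
    intro X hX
    rw [Real.exp_le_exp, Finset.mul_sum]
    refine Finset.sum_le_sum fun j _ => ?_
    rw [mul_comm]
    exact mul_le_mul_of_nonneg_left (hX j).le (hd j)
  have h2 : ∫ X in U, Real.exp (∑ j : Fin p, d j * X (Fin.castLE hnp j) j) ∂μ ≤
      hypF hnp μ d :=
    setIntegral_le_integral (integ_f hnp μ hsupp d)
      (Filter.Eventually.of_forall fun X => (Real.exp_pos _).le)
  exact h1.trans h2

lemma hypF_pos {n p : ℕ} (hnp : p ≤ n) (μ : Measure (Matrix (Fin n) (Fin p) ℝ))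
    [IsProbabilityMeasure μ]
    (hsupp : μ {X : Matrix (Fin n) (Fin p) ℝ | Xᵀ * X = 1} = 1)
    (hinv : ∀ Q : Matrix (Fin n) (Fin n) ℝ, Qᵀ * Q = 1 →
      Measure.map (fun X => Q * X) μ = μ)
    {d : Fin p → ℝ} (hd : ∀ j, 0 ≤ d j) : 0 < hypF hnp μ d := by
  refine lt_of_lt_of_le ?_ (hypF_ge hnp μ hsupp (1/2) hd)
  have hpos := mu_U_pos hnp μ hsupp hinv (δ := 1/2) (by norm_num)
  exact mul_pos (Real.exp_pos _) (ENNReal.toReal_pos hpos.ne' (measure_ne_top μ _))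

lemma meas_orthant {p : ℕ} : MeasurableSet {d : Fin p → ℝ | ∀ j, 0 < d j} := by
  have : {d : Fin p → ℝ | ∀ j, 0 < d j}
      = ⋂ j, (fun d : Fin p → ℝ => d j) ⁻¹' Set.Ioi 0 := by
    ext d; simp [Set.mem_iInter]
  rw [this]
  exact MeasurableSet.iInter fun j => (measurable_pi_apply j) measurableSet_Ioi

lemma lint_exp_fin {p : ℕ} {a : ℝ} (ha : 0 < a) :
    ∫⁻ d in {d : Fin p → ℝ | ∀ j, 0 < d j},
      ENNReal.ofReal (Real.exp (-(a * ∑ j, d j))) < ⊤ := by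
  classical
  set g : ℝ → ℝ := Set.indicator (Set.Ioi 0) (fun x => Real.exp (-(a * x))) with hg
  have hgint : Integrable g := by
    rw [hg, integrable_indicator_iff measurableSet_Ioi]
    simpa [neg_mul] using exp_neg_integrableOn_Ioi 0 ha
  have hfint : Integrable (fun d : Fin p → ℝ => ∏ j, g (d j)) :=
    Integrable.fintype_prod (fun _ => hgint)
  have heq : ∫⁻ d in {d : Fin p → ℝ | ∀ j, 0 < d j},
      ENNReal.ofReal (Real.exp (-(a * ∑ j, d j)))
      = ∫⁻ d in {d : Fin p → ℝ | ∀ j, 0 < d j},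
          ENNReal.ofReal (∏ j, g (d j)) := by
    refine setLIntegral_congr_fun meas_orthant ?_
    intro d hd
    dsimp only
    congr 1
    have : ∀ j : Fin p, g (d j) = Real.exp (-(a * d j)) := fun j =>
      Set.indicator_of_mem (hd j) _
    rw [Finset.prod_congr rfl fun j _ => this j, ← Real.exp_sum]
    congr 1
    rw [Finset.mul_sum]
    simp
  rw [heq]
  have hfin2 : ∫⁻ d : Fin p → ℝ, (‖∏ j, g (d j)‖₊ : ENNReal) < ⊤ := hfint.2
  calc ∫⁻ d in {d : Fin p → ℝ | ∀ j, 0 < d j}, ENNReal.ofReal (∏ j, g (d j))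
      ≤ ∫⁻ d in {d : Fin p → ℝ | ∀ j, 0 < d j},
          ((‖∏ j, g (d j)‖₊ : ENNReal)) :=
        lintegral_mono fun d => Real.ofReal_le_enorm _
    _ ≤ ∫⁻ d : Fin p → ℝ, (‖∏ j, g (d j)‖₊ : ENNReal) := setLIntegral_le_lintegral _ _
    _ < ⊤ := hfin2

/-- The kernel `g(d; ν, η, n) = exp(ν ηᵀ d)/[₀F₁(n/2, D²/4)]^ν` is integrable over `ℝ₊^p`
if and only if `max_j η_j < 1`. Here `μ` is the normalized Haar probability measure on the
Stiefel manifold `V_{n,p}`, `n ≥ p ≥ 1`, and `ν > 0`. -/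
theorem stmt7 {n p : ℕ} (hp : 0 < p) (hnp : p ≤ n)
    (μ : Measure (Matrix (Fin n) (Fin p) ℝ))
    (hprob : IsProbabilityMeasure μ)
    (hsupp : μ {X : Matrix (Fin n) (Fin p) ℝ | Xᵀ * X = 1} = 1)
    (hinv : ∀ Q : Matrix (Fin n) (Fin n) ℝ, Qᵀ * Q = 1 →
      Measure.map (fun X => Q * X) μ = μ)
    (ν : ℝ) (hν : 0 < ν) (η : Fin p → ℝ) :
    (∫⁻ d in {d : Fin p → ℝ | ∀ j, 0 < d j},
        ENNReal.ofReal (Real.exp (ν * ∑ j, η j * d j) / (hypF hnp μ d) ^ ν)) < ⊤ ↔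
      ∀ j, η j < 1 := by
  constructor
  · -- finiteness → all η j < 1
    intro hfin j₀
    by_contra hc
    push_neg at hc
    have key : ∀ d ∈ {d : Fin p → ℝ | ∀ j, 0 < d j},
        ENNReal.ofReal (Real.exp (ν * ∑ j, (η j - 1) * d j)) ≤
          ENNReal.ofReal (Real.exp (ν * ∑ j, η j * d j) / hypF hnp μ d ^ ν) := by
      intro d hd
      apply ENNReal.ofReal_le_ofReal
      have hd' : ∀ j, 0 ≤ d j := fun j => (hd j).le
      have hpos : 0 < hypF hnp μ d := hypF_pos hnp μ hsupp hinv hd'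
      have hle : hypF hnp μ d ^ ν ≤ Real.exp (ν * ∑ j, d j) := by
        calc hypF hnp μ d ^ ν ≤ Real.exp (∑ j, d j) ^ ν :=
              Real.rpow_le_rpow hpos.le (hypF_le hnp μ hsupp hd') hν.le
          _ = Real.exp (ν * ∑ j, d j) := by rw [← Real.exp_mul, mul_comm]
      have hpow : 0 < hypF hnp μ d ^ ν := Real.rpow_pos_of_pos hpos ν
      have hsum : ν * ∑ j, (η j - 1) * d j = ν * ∑ j, η j * d j - ν * ∑ j, d j := by
        rw [← mul_sub, ← Finset.sum_sub_distrib]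
        congr 1
        exact Finset.sum_congr rfl fun j _ => by ring
      calc Real.exp (ν * ∑ j, (η j - 1) * d j)
          = Real.exp (ν * ∑ j, η j * d j) / Real.exp (ν * ∑ j, d j) := by
            rw [← Real.exp_sub, hsum]
        _ ≤ Real.exp (ν * ∑ j, η j * d j) / hypF hnp μ d ^ ν :=
            div_le_div_of_nonneg_left (Real.exp_pos _).le hpow hle
    have hinf : ∫⁻ d in {d : Fin p → ℝ | ∀ j, 0 < d j},
        ENNReal.ofReal (Real.exp (ν * ∑ j, (η j - 1) * d j)) = ⊤ := by
      classical
      set B : Set (Fin p → ℝ) := Set.univ.pi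
        (fun k => if k = j₀ then Set.Ioi (0:ℝ) else Set.Ioo (0:ℝ) 1) with hB
      have hBsub : B ⊆ {d : Fin p → ℝ | ∀ j, 0 < d j} := by
        intro d hd j
        have hdj := hd j (Set.mem_univ j)
        by_cases h : j = j₀
        · simp only [if_pos h] at hdj; exact hdj
        · simp only [if_neg h] at hdj; exact hdj.1
      have hBvol : volume B = ⊤ := by
        rw [hB, volume_pi_pi]
        have hv : ∀ j : Fin p, volume (if j = j₀ then Set.Ioi (0:ℝ) else Set.Ioo 0 1)
            = if j = j₀ then (⊤:ENNReal) else 1 := by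
          intro j; by_cases h : j = j₀ <;> simp [h, Real.volume_Ioi, Real.volume_Ioo]
        rw [Finset.prod_congr rfl fun j _ => hv j,
          Finset.prod_ite_eq' Finset.univ j₀ (fun _ => (⊤:ENNReal))]
        simp
      have hconst : ∀ d ∈ B, ENNReal.ofReal (Real.exp (-(ν * ∑ j, |η j - 1|))) ≤
          ENNReal.ofReal (Real.exp (ν * ∑ j, (η j - 1) * d j)) := by
        intro d hd
        apply ENNReal.ofReal_le_ofReal
        rw [Real.exp_le_exp]
        have hsum : ∑ j, -|η j - 1| ≤ ∑ j, (η j - 1) * d j := by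
          refine Finset.sum_le_sum fun j _ => ?_
          have hdj := hd j (Set.mem_univ j)
          by_cases h : j = j₀
          · subst h
            simp only [if_pos rfl] at hdj
            have h1 : (0:ℝ) ≤ (η j - 1) * d j :=
              mul_nonneg (by linarith) (le_of_lt hdj)
            have h2 := neg_abs_le (η j - 1)
            nlinarith [abs_nonneg (η j - 1)]
          · simp only [if_neg h] at hdj
            obtain ⟨h0, h1⟩ := hdj
            rcases le_or_gt 0 (η j - 1) with hc2 | hc2
            · nlinarith [abs_nonneg (η j - 1)]
            · rw [abs_of_neg hc2]; nlinarith
        have hneg : ∑ j, -|η j - 1| = -∑ j, |η j - 1| := by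
          rw [← Finset.sum_neg_distrib]
        rw [hneg] at hsum
        have := mul_le_mul_of_nonneg_left hsum hν.le
        linarith [this]
      have hBmeas : MeasurableSet B := by
        refine MeasurableSet.univ_pi fun j => ?_
        by_cases h : j = j₀ <;> simp [h, measurableSet_Ioi, measurableSet_Ioo]
      have h1 : (⊤:ENNReal) ≤ ∫⁻ d in B,
          ENNReal.ofReal (Real.exp (ν * ∑ j, (η j - 1) * d j)) := by
        calc (⊤:ENNReal) = ENNReal.ofReal (Real.exp (-(ν * ∑ j, |η j - 1|))) * volume B := by
              rw [hBvol, ENNReal.mul_top]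
              simp [Real.exp_pos]
          _ = ∫⁻ _ in B, ENNReal.ofReal (Real.exp (-(ν * ∑ j, |η j - 1|))) :=
              (setLIntegral_const _ _).symm
          _ ≤ ∫⁻ d in B, ENNReal.ofReal (Real.exp (ν * ∑ j, (η j - 1) * d j)) :=
              setLIntegral_mono' hBmeas hconst
      exact top_le_iff.mp (h1.trans (lintegral_mono_set hBsub))
    have hcontr : (⊤:ENNReal) ≤ ∫⁻ d in {d : Fin p → ℝ | ∀ j, 0 < d j},
        ENNReal.ofReal (Real.exp (ν * ∑ j, η j * d j) / hypF hnp μ d ^ ν) := by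
      rw [← hinf]
      exact setLIntegral_mono' meas_orthant key
    exact absurd (lt_of_le_of_lt hcontr hfin) (lt_irrefl ⊤)
  · intro hη
    have hne : (Finset.univ : Finset (Fin p)).Nonempty := ⟨⟨0, hp⟩, Finset.mem_univ _⟩
    set m : ℝ := Finset.univ.inf' hne (fun j => 1 - η j) with hm
    have hm0 : 0 < m := by
      rw [hm, Finset.lt_inf'_iff]
      intro j _
      linarith [hη j]
    set δ : ℝ := min 1 m / 2 with hδdef
    have hδ0 : 0 < δ := by
      rw [hδdef]
      have := lt_min one_pos hm0
      linarith
    have hηδ : ∀ j, η j ≤ 1 - 2*δ := by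
      intro j
      have h1 : m ≤ 1 - η j := Finset.inf'_le _ (Finset.mem_univ j)
      have h2 : min 1 m ≤ m := min_le_right _ _
      rw [hδdef]; linarith
    set K : ℝ := (μ {X : Matrix (Fin n) (Fin p) ℝ |
      ∀ j, 1 - δ < X (Fin.castLE hnp j) j}).toReal with hKdef
    have hKpos : 0 < K := by
      rw [hKdef]
      exact ENNReal.toReal_pos (mu_U_pos hnp μ hsupp hinv hδ0).ne' (measure_ne_top μ _)
    have key : ∀ d ∈ {d : Fin p → ℝ | ∀ j, 0 < d j},
        ENNReal.ofReal (Real.exp (ν * ∑ j, η j * d j) / hypF hnp μ d ^ ν) ≤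
        ENNReal.ofReal (K ^ (-ν) * Real.exp (-(ν * δ * ∑ j, d j))) := by
      intro d hd
      apply ENNReal.ofReal_le_ofReal
      have hd' : ∀ j, 0 ≤ d j := fun j => (hd j).le
      have hlow : Real.exp ((1-δ) * ∑ j, d j) * K ≤ hypF hnp μ d := by
        rw [hKdef]
        exact hypF_ge hnp μ hsupp δ hd'
      have hbase : 0 < Real.exp ((1-δ) * ∑ j, d j) * K := mul_pos (Real.exp_pos _) hKpos
      have hpow : (Real.exp ((1-δ) * ∑ j, d j) * K) ^ ν ≤ hypF hnp μ d ^ ν :=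
        Real.rpow_le_rpow hbase.le hlow hν.le
      have hpowpos : 0 < (Real.exp ((1-δ) * ∑ j, d j) * K) ^ ν :=
        Real.rpow_pos_of_pos hbase ν
      have step1 : Real.exp (ν * ∑ j, η j * d j) / hypF hnp μ d ^ ν
          ≤ Real.exp (ν * ∑ j, η j * d j) / (Real.exp ((1-δ) * ∑ j, d j) * K) ^ ν :=
        div_le_div_of_nonneg_left (Real.exp_pos _).le hpowpos hpow
      refine step1.trans ?_
      rw [div_le_iff₀ hpowpos]
      have hexpand : (Real.exp ((1-δ) * ∑ j, d j) * K) ^ ν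
          = Real.exp ((1-δ) * (∑ j, d j) * ν) * K ^ ν := by
        rw [Real.mul_rpow (Real.exp_pos _).le hKpos.le, ← Real.exp_mul]
      rw [hexpand]
      have hKK : K ^ (-ν) * K ^ ν = 1 := by
        rw [← Real.rpow_add hKpos]
        simp
      have hrhs : K ^ (-ν) * Real.exp (-(ν * δ * ∑ j, d j)) *
          (Real.exp ((1-δ) * (∑ j, d j) * ν) * K ^ ν)
          = Real.exp (-(ν * δ * ∑ j, d j) + (1-δ) * (∑ j, d j) * ν) := by
        have h3 : K ^ (-ν) * Real.exp (-(ν * δ * ∑ j, d j)) *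
            (Real.exp ((1-δ) * (∑ j, d j) * ν) * K ^ ν)
            = (K ^ (-ν) * K ^ ν) *
              (Real.exp (-(ν * δ * ∑ j, d j)) * Real.exp ((1-δ) * (∑ j, d j) * ν)) := by
          ring
        rw [h3, hKK, one_mul, ← Real.exp_add]
      rw [hrhs, Real.exp_le_exp]
      have hsum : ∑ j, η j * d j ≤ (1 - 2*δ) * ∑ j, d j := by
        rw [Finset.mul_sum]
        exact Finset.sum_le_sum fun j _ =>
          mul_le_mul_of_nonneg_right (hηδ j) (hd' j)
      have hmul := mul_le_mul_of_nonneg_left hsum hν.le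
      nlinarith [hmul]
    have hmeas2 : Measurable (fun d : Fin p → ℝ =>
        ENNReal.ofReal (Real.exp (-(ν * δ * ∑ j, d j)))) := by
      apply Measurable.ennreal_ofReal
      apply Measurable.exp
      apply Measurable.neg
      exact measurable_const.mul (Finset.measurable_sum _ fun j _ => measurable_pi_apply j)
    calc ∫⁻ d in {d : Fin p → ℝ | ∀ j, 0 < d j},
          ENNReal.ofReal (Real.exp (ν * ∑ j, η j * d j) / hypF hnp μ d ^ ν)
        ≤ ∫⁻ d in {d : Fin p → ℝ | ∀ j, 0 < d j},
            ENNReal.ofReal (K ^ (-ν) * Real.exp (-(ν * δ * ∑ j, d j))) :=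
          setLIntegral_mono' meas_orthant key
      _ = ∫⁻ d in {d : Fin p → ℝ | ∀ j, 0 < d j},
            ENNReal.ofReal (K ^ (-ν)) * ENNReal.ofReal (Real.exp (-(ν * δ * ∑ j, d j))) :=
          lintegral_congr fun d => ENNReal.ofReal_mul (Real.rpow_nonneg hKpos.le (-ν))
      _ = ENNReal.ofReal (K ^ (-ν)) *
            ∫⁻ d in {d : Fin p → ℝ | ∀ j, 0 < d j},
              ENNReal.ofReal (Real.exp (-(ν * δ * ∑ j, d j))) :=
          lintegral_const_mul _ hmeas2
      _ < ⊤ := ENNReal.mul_lt_top ENNReal.ofReal_lt_top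
          (lint_exp_fin (mul_pos hν hδ0))
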